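/- Let m be a natural number and let P ∈ ℚ[X] be a polynomial such that P(-X) = -P(X) (P is odd), deg P ≤ 2m+1, and P(n) ∈ ℤ for every integer n. Then there exist integers c_0, c_1, ..., c_m such that P(X) = ∑_{k=0}^{m} c_k · C(X+k, 2k+1), where C(X+k, 2k+1) = (X+k)(X+k-1)···(X-k) / (2k+1)! is the binomial-coefficient polynomial of degree 2k+1. -/

import Mathlib

open Polynomial

/-- The binomial-coefficient polynomial `C(X+k, 2k+1)
= (X+k)(X+k-1)···(X-k) / (2k+1)!`, an odd polynomial of degree `2k+1`. -/
noncomputable def binomShiftPoly (k : ℕ) : Polynomial ℚ :=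
  Polynomial.C (((2 * k + 1).factorial : ℚ)⁻¹) *
    ∏ j ∈ Finset.range (2 * k + 1), (Polynomial.X + Polynomial.C ((k : ℚ) - (j : ℚ)))

lemma descPochhammer_eval_prod (N : ℕ) (x : ℚ) :
    (descPochhammer ℚ N).eval x = ∏ j ∈ Finset.range N, (x - j) := by
  induction N with
  | zero => simp
  | succ n ih => rw [descPochhammer_succ_eval, ih, Finset.prod_range_succ]

lemma binomShiftPoly_eval (k : ℕ) (x : ℚ) :
    (binomShiftPoly k).eval x =
      (((2 * k + 1).factorial : ℚ))⁻¹ * (descPochhammer ℚ (2 * k + 1)).eval (x + k) := by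
  rw [binomShiftPoly, eval_mul, eval_C, descPochhammer_eval_prod, eval_prod]
  congr 1
  refine Finset.prod_congr rfl fun j _ => ?_
  simp only [eval_add, eval_X, eval_C]
  ring

/-- Integrality of `binomShiftPoly` at integers. -/
lemma binomShiftPoly_int (k : ℕ) (n : ℤ) :
    ∃ z : ℤ, (binomShiftPoly k).eval (n : ℚ) = (z : ℚ) := by
  refine ⟨Ring.choose (n + k) (2 * k + 1), ?_⟩
  rw [binomShiftPoly_eval]
  have h1 : (descPochhammer ℤ (2 * k + 1)).eval (n + k) =
      (2 * k + 1).factorial • Ring.choose (n + (k : ℤ)) (2 * k + 1) := by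
    rw [eval_eq_smeval, Ring.descPochhammer_eq_factorial_smul_choose]
  have h2 : ((n : ℚ) + k) = (((n + (k : ℤ)) : ℤ) : ℚ) := by push_cast; ring
  rw [h2, ← descPochhammer_eval_cast, h1]
  rw [nsmul_eq_mul]
  push_cast
  rw [← mul_assoc, inv_mul_cancel₀ (by positivity), one_mul]

lemma binomShiftPoly_eval_zero {k j : ℕ} (h : k < j) :
    (binomShiftPoly j).eval ((k : ℚ) + 1) = 0 := by
  rw [binomShiftPoly, eval_mul, eval_prod]
  refine mul_eq_zero_of_right _ (Finset.prod_eq_zero (i := k + 1 + j) ?_ ?_)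
  · simp only [Finset.mem_range]; omega
  · simp only [eval_add, eval_X, eval_C]
    push_cast
    ring

lemma binomShiftPoly_eval_one (k : ℕ) :
    (binomShiftPoly k).eval ((k : ℚ) + 1) = 1 := by
  rw [binomShiftPoly_eval]
  have h2 : ((k : ℚ) + 1 + k) = (((2 * k + 1 : ℕ)) : ℚ) := by push_cast; ring
  rw [h2, descPochhammer_eval_eq_descFactorial, Nat.descFactorial_self]
  rw [inv_mul_cancel₀ (by positivity)]

lemma coeff_comp_neg_X (p : Polynomial ℚ) (n : ℕ) :
    (p.comp (-X)).coeff n = (-1) ^ n * p.coeff n := by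
  induction p using Polynomial.induction_on' with
  | add p q hp hq => simp only [add_comp, coeff_add, hp, hq]; ring
  | monomial i a =>
    have h0 : (monomial i a).comp (-X) = C a * (C ((-1 : ℚ) ^ i) * X ^ i) := by
      rw [← C_mul_X_pow_eq_monomial, mul_comp, C_comp, pow_comp, X_comp, neg_pow,
        map_pow, map_neg, map_one]
    rw [h0, coeff_C_mul, coeff_C_mul, coeff_X_pow, coeff_monomial]
    rcases eq_or_ne n i with rfl | hne
    · simp [mul_comm]
    · simp [hne, Ne.symm hne]

lemma even_coeff_eq_zero {p : Polynomial ℚ} (hodd : p.comp (-X) = -p)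
    {n : ℕ} (hn : Even n) : p.coeff n = 0 := by
  have := congrArg (fun q => Polynomial.coeff q n) hodd
  simp only [coeff_comp_neg_X, coeff_neg, hn.neg_one_pow, one_mul] at this
  linarith

lemma binomShiftPoly_prod_monic (k : ℕ) :
    (∏ j ∈ Finset.range (2 * k + 1),
      (Polynomial.X + Polynomial.C ((k : ℚ) - (j : ℚ)))).Monic :=
  monic_prod_of_monic _ _ fun _ _ => monic_X_add_C _

lemma binomShiftPoly_prod_natDegree (k : ℕ) :
    (∏ j ∈ Finset.range (2 * k + 1),
      (Polynomial.X + Polynomial.C ((k : ℚ) - (j : ℚ)))).natDegree = 2 * k + 1 := by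
  rw [natDegree_prod _ _ fun j _ => (monic_X_add_C _).ne_zero,
    Finset.sum_congr rfl fun (i : ℕ) _ => natDegree_X_add_C ((k : ℚ) - (i : ℚ)),
    Finset.sum_const, Finset.card_range, smul_eq_mul, mul_one]

lemma binomShiftPoly_natDegree (k : ℕ) : (binomShiftPoly k).natDegree = 2 * k + 1 := by
  rw [binomShiftPoly, natDegree_C_mul (by positivity), binomShiftPoly_prod_natDegree]

lemma binomShiftPoly_coeff_top (k : ℕ) :
    (binomShiftPoly k).coeff (2 * k + 1) = ((2 * k + 1).factorial : ℚ)⁻¹ := by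
  rw [binomShiftPoly, coeff_C_mul]
  have h := (binomShiftPoly_prod_monic k).leadingCoeff
  rw [leadingCoeff, binomShiftPoly_prod_natDegree] at h
  rw [h, mul_one]

lemma binomShiftPoly_odd (k : ℕ) :
    (binomShiftPoly k).comp (-X) = -binomShiftPoly k := by
  apply Polynomial.funext
  intro x
  rw [eval_comp, eval_neg, eval_X, eval_neg]
  rw [binomShiftPoly_eval, binomShiftPoly_eval]
  rw [descPochhammer_eval_prod, descPochhammer_eval_prod]
  have h3 := Finset.prod_range_reflect (fun t : ℕ => x + (k : ℚ) - t) (2 * k + 1)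
  simp only [Nat.add_sub_cancel] at h3
  have key : ∏ j ∈ Finset.range (2 * k + 1), (-x + (k : ℚ) - j)
      = - ∏ j ∈ Finset.range (2 * k + 1), (x + (k : ℚ) - j) := by
    calc ∏ j ∈ Finset.range (2 * k + 1), (-x + (k : ℚ) - j)
        = ∏ j ∈ Finset.range (2 * k + 1),
            (-1) * (x + (k : ℚ) - ((2 * k - j : ℕ) : ℚ)) := by
          refine Finset.prod_congr rfl fun j hj => ?_
          simp only [Finset.mem_range] at hj
          rw [Nat.cast_sub (by omega)]
          push_cast
          ring
      _ = (-1) ^ (2 * k + 1) *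
            ∏ j ∈ Finset.range (2 * k + 1), (x + (k : ℚ) - ((2 * k - j : ℕ) : ℚ)) := by
          rw [Finset.prod_mul_distrib, Finset.prod_const, Finset.card_range]
      _ = - ∏ j ∈ Finset.range (2 * k + 1), (x + (k : ℚ) - j) := by
          rw [h3, Odd.neg_one_pow ⟨k, by ring⟩]
          ring
  rw [key]
  ring

/-- Stage 1: rational span. -/
lemma rat_span (m : ℕ) (P : Polynomial ℚ)
    (hodd : P.comp (-X) = -P) (hdeg : P.natDegree ≤ 2 * m + 1) :
    ∃ q : ℕ → ℚ, P = ∑ k ∈ Finset.range (m + 1), C (q k) * binomShiftPoly k := by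
  induction m generalizing P with
  | zero =>
    refine ⟨fun _ => P.coeff 1, ?_⟩
    have h0 : P.coeff 0 = 0 := even_coeff_eq_zero hodd (by norm_num)
    have hP := Polynomial.eq_X_add_C_of_natDegree_le_one (by simpa using hdeg)
    have hb : binomShiftPoly 0 = X := by
      rw [binomShiftPoly]
      norm_num [Finset.prod_range_one]
    rw [Finset.sum_range_one, hb, hP, h0]
    simp
  | succ m ih =>
    set a := P.coeff (2 * (m + 1) + 1) with ha
    set Q := P - C (a * (2 * (m + 1) + 1).factorial) * binomShiftPoly (m + 1) with hQ
    have hQodd : Q.comp (-X) = -Q := by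
      rw [hQ, sub_comp, hodd, mul_comp, C_comp, binomShiftPoly_odd]
      ring
    have hctop : Q.coeff (2 * (m + 1) + 1) = 0 := by
      rw [hQ, coeff_sub, coeff_C_mul, binomShiftPoly_coeff_top, ← ha]
      have : ((2 * (m + 1) + 1).factorial : ℚ) ≠ 0 := by positivity
      field_simp
      ring
    have hQdeg2 : Q.natDegree ≤ 2 * m + 1 := by
      rw [Polynomial.natDegree_le_iff_coeff_eq_zero]
      intro i hi
      rcases Nat.lt_trichotomy i (2 * (m + 1) + 1) with h | rfl | h
      · have hieq : i = 2 * m + 2 := by omega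
        subst hieq
        exact even_coeff_eq_zero hQodd ⟨m + 1, by ring⟩
      · exact hctop
      · rw [hQ, coeff_sub, coeff_C_mul]
        rw [Polynomial.coeff_eq_zero_of_natDegree_lt (lt_of_le_of_lt hdeg h),
          Polynomial.coeff_eq_zero_of_natDegree_lt
            (by rw [binomShiftPoly_natDegree]; exact h)]
        ring
    obtain ⟨q, hq⟩ := ih Q hQodd hQdeg2
    refine ⟨fun k => if k = m + 1 then a * (2 * (m + 1) + 1).factorial else q k, ?_⟩
    rw [Finset.sum_range_succ]
    have hcongr : ∀ k ∈ Finset.range (m + 1),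
        C (if k = m + 1 then a * (2 * (m + 1) + 1).factorial else q k) * binomShiftPoly k
          = C (q k) * binomShiftPoly k := by
      intro k hk
      simp only [Finset.mem_range] at hk
      rw [if_neg (by omega)]
    rw [Finset.sum_congr rfl hcongr, ← hq]
    have hbeta : (fun k => if k = m + 1 then a * ((2 * (m + 1) + 1).factorial : ℚ) else q k)
        (m + 1) = a * ((2 * (m + 1) + 1).factorial : ℚ) := by simp
    rw [hbeta, hQ]
    ring

theorem odd_integer_valued_polynomial_basis (m : ℕ) (P : Polynomial ℚ)
    (hodd : P.comp (-Polynomial.X) = -P)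
    (hdeg : P.natDegree ≤ 2 * m + 1)
    (hint : ∀ n : ℤ, ∃ z : ℤ, P.eval (n : ℚ) = (z : ℚ)) :
    ∃ c : ℕ → ℤ,
      P = ∑ k ∈ Finset.range (m + 1), Polynomial.C ((c k : ℚ)) * binomShiftPoly k := by
  obtain ⟨q, hq⟩ := rat_span m P hodd hdeg
  set S := (Int.castRingHom ℚ).range with hS
  have key : ∀ k, k ≤ m → q k ∈ S := by
    intro k
    induction k using Nat.strong_induction_on with
    | _ k IH =>
      intro hk
      have heval : P.eval ((k : ℚ) + 1) =
          ∑ j ∈ Finset.range (m + 1), q j * (binomShiftPoly j).eval ((k : ℚ) + 1) := by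
        rw [hq, eval_finset_sum]
        exact Finset.sum_congr rfl fun j _ => by rw [eval_mul, eval_C]
      have hz : ∑ j ∈ Finset.Ico (k + 1) (m + 1),
          q j * (binomShiftPoly j).eval ((k : ℚ) + 1) = 0 :=
        Finset.sum_eq_zero fun j hj => by
          rw [binomShiftPoly_eval_zero (Finset.mem_Ico.mp hj).1, mul_zero]
      have hsplit : ∑ j ∈ Finset.range (m + 1), q j * (binomShiftPoly j).eval ((k : ℚ) + 1)
          = ∑ j ∈ Finset.range k, q j * (binomShiftPoly j).eval ((k : ℚ) + 1) + q k := by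
        rw [← Finset.sum_range_add_sum_Ico _ (Nat.succ_le_succ hk), hz, add_zero,
          Finset.sum_range_succ, binomShiftPoly_eval_one, mul_one]
      have hqk : q k = P.eval ((k : ℚ) + 1)
          - ∑ j ∈ Finset.range k, q j * (binomShiftPoly j).eval ((k : ℚ) + 1) := by
        rw [heval, hsplit]; ring
      rw [hqk]
      have hcast : ((k : ℚ) + 1) = (((k : ℤ) + 1 : ℤ) : ℚ) := by push_cast; ring
      have hPk : P.eval ((k : ℚ) + 1) ∈ S := by
        obtain ⟨z, hz'⟩ := hint ((k : ℤ) + 1)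
        exact RingHom.mem_range.mpr ⟨z, by rw [hcast, hz']; simp⟩
      refine sub_mem hPk (Subring.sum_mem _ fun j hj => ?_)
      simp only [Finset.mem_range] at hj
      obtain ⟨w, hw⟩ := binomShiftPoly_int j ((k : ℤ) + 1)
      have hw' : (binomShiftPoly j).eval ((k : ℚ) + 1) ∈ S :=
        RingHom.mem_range.mpr ⟨w, by rw [hcast, hw]; simp⟩
      exact mul_mem (IH j hj (by omega)) hw'
  have key' : ∀ k, ∃ z : ℤ, k ≤ m → (z : ℚ) = q k := by
    intro k
    by_cases h : k ≤ m
    · obtain ⟨z, hz⟩ := RingHom.mem_range.mp (key k h)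
      exact ⟨z, fun _ => by simpa using hz⟩
    · exact ⟨0, fun h' => absurd h' h⟩
  choose c hc using key'
  refine ⟨c, ?_⟩
  rw [hq]
  refine Finset.sum_congr rfl fun k hk => ?_
  rw [hc k (Nat.lt_succ_iff.mp (Finset.mem_range.mp hk))]
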